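/- For any Boolean function f : {0,1}^n → {0,1} and coordinate i ∈ [n], the Shapley value of coordinate i equals the integral over p ∈ [0,1] of the p-biased influence: Inf_{Shapley}[f,i] = ∫₀¹ Inf^{(p)}[f,i] dp. -/

import Mathlib

open Finset

/-- Flip the i-th bit of x. -/
def flipBit {n : ℕ} (i : Fin n) (x : Fin n → Bool) : Fin n → Bool :=
  Function.update x i (!x i)

/-- The product p-biased distribution weight of x ∈ {0,1}^n. -/
def muW {n : ℕ} (p : ℝ) (x : Fin n → Bool) : ℝ :=
  ∏ i, if x i then p else 1 - p

/-- The p-biased Fourier character associated to S ⊆ [n]. -/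
noncomputable def chiW {n : ℕ} (p : ℝ) (S : Finset (Fin n)) (x : Fin n → Bool) : ℝ :=
  ∏ i ∈ S, ((if x i then (1 : ℝ) else 0) - p) / Real.sqrt (p * (1 - p))

/-- The p-biased Fourier coefficient of f at S. -/
noncomputable def fhat {n : ℕ} (p : ℝ) (f : (Fin n → Bool) → ℝ) (S : Finset (Fin n)) : ℝ :=
  ∑ x : Fin n → Bool, muW p x * (f x * chiW p S x)

/-- The influence of coordinate i in f under the p-biased distribution. -/
def infl {n : ℕ} (p : ℝ) (f : (Fin n → Bool) → ℝ) (i : Fin n) : ℝ :=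
  ∑ x : Fin n → Bool, muW p x * (f x - f (flipBit i x)) ^ 2
/-- Hamming weight of x ∈ {0,1}^n. -/
def ham {n : ℕ} (x : Fin n → Bool) : ℕ :=
  (Finset.univ.filter (fun i => x i = true)).card

/-- The Shapley distribution weight of x ∈ {0,1}^n. -/
noncomputable def shapW {n : ℕ} (x : Fin n → Bool) : ℝ :=
  (((n : ℝ) + 1) * (Nat.choose n (ham x) : ℝ))⁻¹
/-- Embedding of Bool into ℝ. -/
def bR (b : Bool) : ℝ := if b then 1 else 0

/-- The influence of coordinate i under the Shapley distribution. -/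
noncomputable def shapInfl {n : ℕ} (f : (Fin n → Bool) → Bool) (i : Fin n) : ℝ :=
  ∑ x : Fin n → Bool, shapW x * (bR (f x) - bR (f (flipBit i x))) ^ 2


lemma betaNat (m : ℕ) : ∀ k : ℕ,
    ∫ x in (0:ℝ)..1, x ^ k * (1 - x) ^ m =
      (Nat.factorial k * Nat.factorial m : ℝ) / Nat.factorial (k + m + 1) := by
  induction m with
  | zero =>
      intro k
      rw [show (fun x : ℝ => x ^ k * (1 - x) ^ 0) = fun x : ℝ => x ^ k by funext x; simp]
      rw [integral_pow]
      have : (0:ℝ) < Nat.factorial k := by positivity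
      rw [show k + 0 + 1 = k + 1 by ring, Nat.factorial_succ]
      push_cast
      field_simp
      simp
  | succ m ih =>
      intro k
      have h1 : ∀ x : ℝ, x ^ k * (1 - x) ^ (m + 1)
          = x ^ k * (1 - x) ^ m - x ^ (k + 1) * (1 - x) ^ m := by
        intro x; ring
      have c1 : Continuous fun x : ℝ => x ^ k * (1 - x) ^ m := by continuity
      have c2 : Continuous fun x : ℝ => x ^ (k + 1) * (1 - x) ^ m := by continuity
      rw [show (fun x : ℝ => x ^ k * (1 - x) ^ (m + 1))
          = fun x : ℝ => x ^ k * (1 - x) ^ m - x ^ (k + 1) * (1 - x) ^ m from funext h1]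
      rw [intervalIntegral.integral_sub (c1.intervalIntegrable _ _) (c2.intervalIntegrable _ _),
        ih k, ih (k + 1), show k + 1 + m + 1 = k + (m+1) + 1 by ring]
      have hk : (0:ℝ) < Nat.factorial (k + m + 1) := by positivity
      have hk2 : (0:ℝ) < Nat.factorial (k + (m + 1) + 1) := by positivity
      rw [div_sub_div _ _ (ne_of_gt hk) (ne_of_gt hk2), div_eq_div_iff (by positivity) (ne_of_gt hk2)]
      have e2 : (Nat.factorial (k + (m+1) + 1) : ℝ)
          = (k + m + 2) * Nat.factorial (k + m + 1) := by
        have : k + (m+1) + 1 = (k + m + 1) + 1 := by ring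
        rw [this, Nat.factorial_succ]; push_cast; ring
      rw [e2]
      rw [Nat.factorial_succ m, Nat.factorial_succ k]
      push_cast
      ring

lemma ham_le {n : ℕ} (x : Fin n → Bool) : ham x ≤ n := by
  simpa [ham] using Finset.card_filter_le Finset.univ (fun i => x i = true)

lemma muW_eq {n : ℕ} (p : ℝ) (x : Fin n → Bool) :
    muW p x = p ^ ham x * (1 - p) ^ (n - ham x) := by
  rw [muW, ← Finset.prod_filter_mul_prod_filter_not Finset.univ (fun i => x i = true)]
  congr 1
  · rw [Finset.prod_congr rfl (fun i hi => ?_), Finset.prod_const]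
    · rfl
    · simp only [Finset.mem_filter] at hi; simp [hi.2]
  · rw [Finset.prod_congr rfl (fun i hi => ?_), Finset.prod_const]
    · congr 1
      have := Finset.card_filter_add_card_filter_not
        (s := (Finset.univ : Finset (Fin n))) (p := fun i => x i = true)
      simp only [Finset.card_univ, Fintype.card_fin] at this
      unfold ham
      omega
    · simp only [Finset.mem_filter] at hi; simp [hi.2]

lemma shapW_eq {n : ℕ} (x : Fin n → Bool) :
    shapW x = (Nat.factorial (ham x) * Nat.factorial (n - ham x) : ℝ)
      / Nat.factorial (ham x + (n - ham x) + 1) := by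
  have hk := ham_le x
  have h1 : ham x + (n - ham x) + 1 = n + 1 := by omega
  rw [shapW, h1, Nat.factorial_succ]
  have h2 : (Nat.choose n (ham x)) * Nat.factorial (ham x) * Nat.factorial (n - ham x)
      = Nat.factorial n := Nat.choose_mul_factorial_mul_factorial hk
  have hc : (0:ℝ) < (Nat.choose n (ham x) : ℝ) := by
    exact_mod_cast Nat.choose_pos hk
  rw [eq_div_iff (by positivity), inv_mul_eq_div, div_eq_iff (by positivity)]
  push_cast [← h2]
  ring

/-- The Shapley value of a coordinate equals the integral over p ∈ [0,1] of its
p-biased influence. -/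
theorem shapley_eq_integral_of_biased_influence {n : ℕ}
    (f : (Fin n → Bool) → Bool) (i : Fin n) :
    shapInfl f i = ∫ p in (0 : ℝ)..1, infl p (fun x => bR (f x)) i := by
  unfold shapInfl infl
  rw [intervalIntegral.integral_finset_sum]
  · refine Finset.sum_congr rfl fun x _ => ?_
    have : ∀ p : ℝ, muW p x * (bR (f x) - bR (f (flipBit i x))) ^ 2
        = (p ^ ham x * (1 - p) ^ (n - ham x)) * (bR (f x) - bR (f (flipBit i x))) ^ 2 := by
      intro p; rw [muW_eq]
    simp_rw [this]
    rw [intervalIntegral.integral_mul_const, betaNat, ← shapW_eq, mul_comm]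
  · intro x _
    apply Continuous.intervalIntegrable
    simp_rw [muW_eq]
    continuity
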